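/- arXiv:2408.03821 — 4 statements merged into one kernel-verified Lean document; each statement's English description precedes it below -/
import Mathlib

section
/- For every M > 2/3, the equation (2 - 3M)λ⁶ + 6λ² + 3M + 4 = 0 has exactly one solution λ* > 0. -/
theorem unique_positive_solution_lambda (M : ℝ) (hM : M > 2/3) :
    ∃! l : ℝ, 0 < l ∧ (2 - 3*M)*l^6 + 6*l^2 + 3*M + 4 = 0 := by
  have hc : 0 < 3*M - 2 := by linarith
  -- uniqueness lemma
  have key : ∀ x y : ℝ, 0 < x → 0 < y →
      (2 - 3*M)*x^6 + 6*x^2 + 3*M + 4 = 0 →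
      (2 - 3*M)*y^6 + 6*y^2 + 3*M + 4 = 0 → x = y := by
    intro x y hx hy ex ey
    by_contra hne
    set a := x^2 with ha
    set b := y^2 with hb
    have hab : a ≠ b := by
      intro h
      exact hne (by nlinarith [sq_nonneg (x - y), sq_nonneg (x + y)])
    have e1 : (2 - 3*M)*a^3 + 6*a + 3*M + 4 = 0 := by rw [ha]; ring_nf; ring_nf at ex; linarith
    have e2 : (2 - 3*M)*b^3 + 6*b + 3*M + 4 = 0 := by rw [hb]; ring_nf; ring_nf at ey; linarith
    have hfac : (a - b) * ((2 - 3*M)*(a^2 + a*b + b^2) + 6) = 0 := by linarith [e1, e2, (by ring : (a - b) * ((2 - 3*M)*(a^2 + a*b + b^2) + 6) = ((2 - 3*M)*a^3 + 6*a + 3*M + 4) - ((2 - 3*M)*b^3 + 6*b + 3*M + 4))]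
    have h6 : (3*M - 2)*(a^2 + a*b + b^2) = 6 := by
      rcases mul_eq_zero.1 hfac with h | h
      · exact absurd (by linarith : a = b) hab
      · linarith
    have hap : 0 < a := by positivity
    have hbp : 0 < b := by positivity
    nlinarith [mul_pos hap hbp, mul_pos (mul_pos hap hbp) (add_pos hap hbp), mul_pos hc (mul_pos (mul_pos hap hbp) (add_pos hap hbp))]
  -- existence via IVT
  set c := 3*M - 2 with hcdef
  set t : ℝ := 1 + 12/c + c with ht
  have htpos : 1 ≤ t := by
    have : 0 < 12/c := by positivity
    simp [ht]; linarith
  have hft : (2 - 3*M)*t^3 + 6*t + 3*M + 4 < 0 := by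
    have hct : c * t = c + 12 + c^2 := by
      have hc0 : c ≠ 0 := hc.ne'
      have h12 : c * (12 / c) = 12 := by field_simp
      rw [ht]; linear_combination h12
    have h1 : c * t^3 = (c + 12 + c^2) * t^2 := by rw [← hct]; ring
    nlinarith [sq_nonneg t, mul_le_mul_of_nonneg_left (mul_le_mul htpos htpos zero_le_one (by linarith)) (le_of_lt hc), sq_nonneg (c*t)]
  set b : ℝ := Real.sqrt t with hbdef
  have hbsq : b^2 = t := Real.sq_sqrt (by linarith)
  have hfb : (2 - 3*M)*b^6 + 6*b^2 + 3*M + 4 < 0 := by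
    have : b^6 = t^3 := by rw [← hbsq]; ring
    rw [this, hbsq]; exact hft
  have hf0 : (0:ℝ) < (2 - 3*M)*(0:ℝ)^6 + 6*(0:ℝ)^2 + 3*M + 4 := by norm_num; linarith
  have hb0 : (0:ℝ) ≤ b := Real.sqrt_nonneg t
  have hcont : ContinuousOn (fun x : ℝ => (2 - 3*M)*x^6 + 6*x^2 + 3*M + 4) (Set.Icc 0 b) := by
    fun_prop
  have hsub := intermediate_value_Icc' hb0 hcont
  have h0mem : (0:ℝ) ∈ Set.Icc ((2 - 3*M)*b^6 + 6*b^2 + 3*M + 4) ((2 - 3*M)*(0:ℝ)^6 + 6*(0:ℝ)^2 + 3*M + 4) :=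
    ⟨le_of_lt hfb, le_of_lt hf0⟩
  obtain ⟨l, hl_mem, hl_eq⟩ := hsub h0mem
  have hlpos : 0 < l := by
    rcases lt_or_eq_of_le hl_mem.1 with h | h
    · exact h
    · exfalso; rw [← h] at hl_eq; simp at hl_eq; nlinarith
  refine ⟨l, ⟨hlpos, hl_eq⟩, ?_⟩
  intro y hy
  exact key y l hy.1 hlpos hy.2 hl_eq
end

section
/- For M > 2/3 and λ > 0, the second leading principal minor of DT̂(λ,λ,λ) equals [3(3M-2)λ⁶ + 6λ² + 4 + 3M]·[(2-3M)λ⁶ + 6λ² + 4 + 3M]/(36λ⁴); in particular it is positive for λ < λ* and negative for λ > λ*, where λ* is the unique positive root of (2-3M)λ⁶ + 6λ² + 4 + 3M. -/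
/-- Principal Biot stresses for the Neo-Hooke–Ciarlet–Geymonat model. -/
noncomputable def Tbiot (M : ℝ) (i : Fin 3) (v : Fin 3 → ℝ) : ℝ :=
  v i - 1/(v i) + (M/2 - 1/3) * ((v 0 * v 1 * v 2)^2 / (v i) - 1/(v i))

/-- Jacobian matrix of the principal Biot stress map. -/
noncomputable def DT (M : ℝ) (v : Fin 3 → ℝ) : Matrix (Fin 3) (Fin 3) ℝ :=
  Matrix.of fun i j => deriv (fun t => Tbiot M i (Function.update v j t)) (v j)


lemma diag_deriv (M l : ℝ) (hl : l ≠ 0) :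
    deriv (fun t : ℝ => t - 1/t + (M/2-1/3)*((t*l*l)^2/t - 1/t)) l
      = 1 + 1/l^2 + (M/2-1/3)*(l^4 + 1/l^2) := by
  have he : (fun t : ℝ => t - 1/t + (M/2-1/3)*((t*l*l)^2/t - 1/t))
      =ᶠ[nhds l] (fun t : ℝ => t - t⁻¹ + (M/2-1/3)*(t*l^4 - t⁻¹)) := by
    filter_upwards [eventually_ne_nhds hl] with t ht
    have h2 : (t*l*l)^2/t = t*l^4 := by field_simp
    rw [h2, one_div]
  rw [he.deriv_eq]
  have hinv := hasDerivAt_inv hl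
  have h : HasDerivAt (fun t : ℝ => t - t⁻¹ + (M/2-1/3)*(t*l^4 - t⁻¹))
      (1 - (-(l^2)⁻¹) + (M/2-1/3)*(1*l^4 - (-(l^2)⁻¹))) l :=
    ((hasDerivAt_id l).sub hinv).add
      ((((hasDerivAt_id l).mul_const (l^4)).sub hinv).const_mul _)
  rw [h.deriv]
  field_simp
  ring

lemma off_deriv (M l : ℝ) (hl : l ≠ 0) :
    deriv (fun t : ℝ => l - 1/l + (M/2-1/3)*((l*t*l)^2/l - 1/l)) l
      = (M/2-1/3)*(2*l^4) := by
  have he : (fun t : ℝ => l - 1/l + (M/2-1/3)*((l*t*l)^2/l - 1/l))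
      = (fun t : ℝ => (l - 1/l - (M/2-1/3)/l) + (M/2-1/3)*l^3*t^2) := by
    funext t; field_simp; ring
  rw [he]
  have h : HasDerivAt (fun t : ℝ => (l - 1/l - (M/2-1/3)/l) + (M/2-1/3)*l^3*t^2)
      (0 + (M/2-1/3)*l^3*(2*l^(2-1)*1)) l :=
    (hasDerivAt_const l _).add (((hasDerivAt_id l).pow 2).const_mul _)
  rw [h.deriv]
  ring

lemma dt00 (M l : ℝ) (hl : l ≠ 0) : DT M (fun _ => l) 0 0 =
    1 + 1/l^2 + (M/2-1/3)*(l^4 + 1/l^2) := by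
  have he : (fun t => Tbiot M 0 (Function.update (fun _ => l) 0 t)) =
      fun t : ℝ => t - 1/t + (M/2-1/3)*((t*l*l)^2/t - 1/t) := by
    funext t; simp [Tbiot, Function.update]
  simp only [DT, Matrix.of_apply, he]
  exact diag_deriv M l hl

lemma dt11 (M l : ℝ) (hl : l ≠ 0) : DT M (fun _ => l) 1 1 =
    1 + 1/l^2 + (M/2-1/3)*(l^4 + 1/l^2) := by
  have he : (fun t => Tbiot M 1 (Function.update (fun _ => l) 1 t)) =
      fun t : ℝ => t - 1/t + (M/2-1/3)*((l*t*l)^2/t - 1/t) := by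
    funext t; simp [Tbiot, Function.update]
  simp only [DT, Matrix.of_apply, he]
  have : (fun t : ℝ => t - 1/t + (M/2-1/3)*((l*t*l)^2/t - 1/t)) =
      fun t : ℝ => t - 1/t + (M/2-1/3)*((t*l*l)^2/t - 1/t) := by
    funext t; ring_nf
  rw [this]; exact diag_deriv M l hl

lemma dt01 (M l : ℝ) (hl : l ≠ 0) : DT M (fun _ => l) 0 1 = (M/2-1/3)*(2*l^4) := by
  have he : (fun t => Tbiot M 0 (Function.update (fun _ => l) 1 t)) =
      fun t : ℝ => l - 1/l + (M/2-1/3)*((l*t*l)^2/l - 1/l) := by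
    funext t; simp [Tbiot, Function.update]
  simp only [DT, Matrix.of_apply, he]
  exact off_deriv M l hl

lemma dt10 (M l : ℝ) (hl : l ≠ 0) : DT M (fun _ => l) 1 0 = (M/2-1/3)*(2*l^4) := by
  have he : (fun t => Tbiot M 1 (Function.update (fun _ => l) 0 t)) =
      fun t : ℝ => l - 1/l + (M/2-1/3)*((t*l*l)^2/l - 1/l) := by
    funext t; simp [Tbiot, Function.update]
  simp only [DT, Matrix.of_apply, he]
  have : (fun t : ℝ => l - 1/l + (M/2-1/3)*((t*l*l)^2/l - 1/l)) =
      fun t : ℝ => l - 1/l + (M/2-1/3)*((l*t*l)^2/l - 1/l) := by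
    funext t; ring_nf
  rw [this]; exact off_deriv M l hl


/-- Second leading principal minor of `DT` at equal stretches. -/
noncomputable def m2 (M l : ℝ) : ℝ :=
  (DT M (fun _ => l)) 0 0 * (DT M (fun _ => l)) 1 1 -
    (DT M (fun _ => l)) 0 1 * (DT M (fun _ => l)) 1 0

theorem m2_formula_and_sign (M : ℝ) (hM : M > 2/3) :
    (∀ l : ℝ, 0 < l →
      m2 M l = (3*(3*M - 2)*l^6 + 6*l^2 + 4 + 3*M) *
        ((2 - 3*M)*l^6 + 6*l^2 + 4 + 3*M) / (36*l^4)) ∧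
    ∀ ls : ℝ, 0 < ls → (2 - 3*M)*ls^6 + 6*ls^2 + 4 + 3*M = 0 →
      (∀ l : ℝ, 0 < l → l < ls → 0 < m2 M l) ∧
      (∀ l : ℝ, ls < l → m2 M l < 0) := by
  have hform : ∀ l : ℝ, 0 < l →
      m2 M l = (3*(3*M - 2)*l^6 + 6*l^2 + 4 + 3*M) *
        ((2 - 3*M)*l^6 + 6*l^2 + 4 + 3*M) / (36*l^4) := by
    intro l hl
    have hl0 : l ≠ 0 := ne_of_gt hl
    rw [m2, dt00 M l hl0, dt11 M l hl0, dt01 M l hl0, dt10 M l hl0]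
    field_simp
    ring
  refine ⟨hform, fun ls hls hQ => ?_⟩
  have hP : ∀ l : ℝ, 0 < l → 0 < 3*(3*M - 2)*l^6 + 6*l^2 + 4 + 3*M := by
    intro l hl
    have h6 : 0 < l^6 := by positivity
    have h2 : 0 < l^2 := by positivity
    nlinarith
  have hbr : 6 < (3*M-2)*ls^4 := by
    have h2 : 0 < ls^2 := by positivity
    nlinarith [pow_pos hls 6]
  constructor
  · intro l hl hlls
    have hQl : 0 < (2 - 3*M)*l^6 + 6*l^2 + 4 + 3*M := by
      have hid : (2 - 3*M)*l^6 + 6*l^2 + 4 + 3*M =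
          (ls^2 - l^2)*((3*M-2)*(ls^4 + ls^2*l^2 + l^4) - 6) := by
        linear_combination hQ
      rw [hid]
      have h1 : 0 < ls^2 - l^2 := by nlinarith
      have h2 : 0 < (3*M-2)*(ls^4 + ls^2*l^2 + l^4) - 6 := by nlinarith [sq_nonneg l, sq_nonneg (ls*l), pow_pos hl 4]
      exact mul_pos h1 h2
    rw [hform l hl]
    have : 0 < 36*l^4 := by positivity
    exact div_pos (mul_pos (hP l hl) hQl) this
  · intro l hl
    have hl0 : 0 < l := lt_trans hls hl
    have hQl : (2 - 3*M)*l^6 + 6*l^2 + 4 + 3*M < 0 := by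
      have hid : (2 - 3*M)*l^6 + 6*l^2 + 4 + 3*M =
          (ls^2 - l^2)*((3*M-2)*(ls^4 + ls^2*l^2 + l^4) - 6) := by
        linear_combination hQ
      rw [hid]
      have h1 : ls^2 - l^2 < 0 := by nlinarith
      have h2 : 0 < (3*M-2)*(ls^4 + ls^2*l^2 + l^4) - 6 := by nlinarith [sq_nonneg l, sq_nonneg (ls*l), pow_pos hl0 4]
      exact mul_neg_of_neg_of_pos h1 h2
    rw [hform l hl0]
    have h36 : 0 < 36*l^4 := by positivity
    exact div_neg_of_neg_of_pos (mul_neg_of_pos_of_neg (hP l hl0) hQl) h36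
end

section
/- For M > 2/3, the matrix DT̂(λ,λ,λ) is positive definite for 0 < λ < λ* and not positive semidefinite for λ > λ*, where λ* is the unique positive root of (2-3M)λ⁶ + 6λ² + 4 + 3M = 0. -/
lemma deriv_diagX (c l : ℝ) (hl : 0 < l) (g : ℝ → ℝ)
    (hg : ∀ t : ℝ, t ≠ 0 → g t = t - t⁻¹ + c * (l^4 * t - t⁻¹)) :
    deriv g l = 1 + 1/l^2 + c * (l^4 + 1/l^2) := by
  have hev : g =ᶠ[nhds l] fun t => t - t⁻¹ + c * (l^4 * t - t⁻¹) := by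
    filter_upwards [eventually_ne_nhds hl.ne'] with t ht
    simp [hg t ht]
  rw [hev.deriv_eq]
  have h : HasDerivAt (fun t : ℝ => t - t⁻¹ + c * (l^4 * t - t⁻¹))
      (1 - (-(l^2)⁻¹) + c * (l^4 * 1 - (-(l^2)⁻¹))) l :=
    ((hasDerivAt_id l).sub (hasDerivAt_inv hl.ne')).add
      ((((hasDerivAt_id l).const_mul (l^4)).sub (hasDerivAt_inv hl.ne')).const_mul c)
  rw [h.deriv]; field_simp; ring

lemma deriv_offX (c l K : ℝ) (g : ℝ → ℝ)
    (hg : ∀ t : ℝ, g t = K + c * l^3 * t^2) :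
    deriv g l = 2 * c * l^4 := by
  have : g = fun t => K + c * l^3 * t^2 := funext hg
  rw [this]
  have h : HasDerivAt (fun t : ℝ => K + c * l^3 * t^2)
      (c * l^3 * (2 * l^1)) l :=
    (((hasDerivAt_pow 2 l).const_mul (c*l^3)).const_add K)
  rw [h.deriv]; ring

lemma diag_entry (M l : ℝ) (hl : 0 < l) (i : Fin 3) :
    deriv (fun t => Tbiot M i (Function.update (fun _ => l) i t)) l
      = 1 + 1/l^2 + (M/2 - 1/3) * (l^4 + 1/l^2) := by
  have hne := hl.ne'
  refine deriv_diagX _ _ hl _ ?_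
  intro t ht
  fin_cases i <;>
  · simp only [Tbiot, Function.update_apply, Fin.ext_iff, reduceIte, Fin.isValue, Fin.val_zero, Fin.val_one, Fin.val_two, Nat.reduceEqDiff]
    field_simp

lemma off_entry (M l : ℝ) (hl : 0 < l) (i j : Fin 3) (hij : i ≠ j) :
    deriv (fun t => Tbiot M i (Function.update (fun _ => l) j t)) l
      = 2 * (M/2 - 1/3) * l^4 := by
  have hne := hl.ne'
  refine deriv_offX (M/2 - 1/3) l (l - 1/l - (M/2 - 1/3)/l) _ ?_
  intro t
  fin_cases i <;> fin_cases j <;> first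
  | exact absurd rfl hij
  | (simp only [Tbiot, Function.update_apply, Fin.ext_iff, reduceIte, Fin.isValue, Fin.val_zero, Fin.val_one, Fin.val_two, Nat.reduceEqDiff]
     field_simp
     ring)

lemma DT_eq (M l : ℝ) (hl : 0 < l) :
    DT M (fun _ => l) = Matrix.of fun i j =>
      if i = j then 1 + 1/l^2 + (M/2 - 1/3) * (l^4 + 1/l^2)
      else 2 * (M/2 - 1/3) * l^4 := by
  ext i j
  simp only [DT, Matrix.of_apply]
  by_cases h : i = j
  · subst h
    rw [if_pos rfl]
    exact diag_entry M l hl i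
  · rw [if_neg h]
    exact off_entry M l hl i j h

theorem DT_posdef_iff (M : ℝ) (hM : M > 2/3) (ls : ℝ) (hls : 0 < ls)
    (hroot : (2 - 3*M)*ls^6 + 6*ls^2 + 4 + 3*M = 0) :
    (∀ l : ℝ, 0 < l → l < ls → (DT M (fun _ => l)).PosDef) ∧
    (∀ l : ℝ, ls < l → ¬ (DT M (fun _ => l)).PosSemidef) := by
  set c : ℝ := M/2 - 1/3 with hc_def
  have hc : 0 < c := by rw [hc_def]; linarith
  have hroot' : c * ls^6 = ls^2 + 1 + c := by rw [hc_def]; nlinarith [hroot]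
  constructor
  · intro l hl hlls
    have key : c * l^6 < l^2 + 1 + c := by
      have h6 : l^6 < ls^6 := pow_lt_pow_left₀ hlls hl.le (by norm_num)
      have h4 : l^4 < ls^4 := pow_lt_pow_left₀ hlls hl.le (by norm_num)
      have h1 : l^6 * ls^2 < l^2 * ls^6 := by
        nlinarith [mul_pos (mul_pos hl hl) (mul_pos hls hls)]
      have hls6 : (0:ℝ) < ls^6 := by positivity
      nlinarith [mul_pos hc hls6]
    rw [DT_eq M l hl]
    set a : ℝ := 1 + 1/l^2 + c * (l^4 + 1/l^2) with ha_def
    set b : ℝ := 2 * c * l^4 with hb_def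
    have hb : 0 < b := by rw [hb_def]; positivity
    have hab : b < a := by
      have hmul : (a - b) * l^2 = l^2 + 1 + c - c * l^6 := by
        rw [ha_def, hb_def]; field_simp; ring
      nlinarith [pow_pos hl 2]
    refine Matrix.posDef_iff_dotProduct_mulVec.mpr ⟨?_, ?_⟩
    · unfold Matrix.IsHermitian
      ext i j
      simp only [Matrix.conjTranspose_apply, Matrix.of_apply, star_trivial]
      by_cases h : i = j <;> simp [h, eq_comm]
    · intro x hx
      have hQ : dotProduct (star x)
            ((Matrix.of fun i j => if i = j then a else b).mulVec x)
          = (a - b) * (x 0 ^ 2 + x 1 ^ 2 + x 2 ^ 2) + b * (x 0 + x 1 + x 2)^2 := by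
        simp [Matrix.mulVec, dotProduct, Fin.sum_univ_three]
        ring
      rw [hQ]
      have hxs : 0 < x 0 ^ 2 + x 1 ^ 2 + x 2 ^ 2 := by
        rcases Function.ne_iff.mp hx with ⟨i, hi⟩
        fin_cases i <;> simp only [Pi.zero_apply] at hi <;> positivity
      nlinarith [sq_nonneg (x 0 + x 1 + x 2)]
  · intro l hlls hPSD
    have hl : 0 < l := lt_trans hls hlls
    have key : l^2 + 1 + c < c * l^6 := by
      have h6 : ls^6 < l^6 := pow_lt_pow_left₀ hlls hls.le (by norm_num)
      have h4 : ls^4 < l^4 := pow_lt_pow_left₀ hlls hls.le (by norm_num)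
      have h1 : l^2 * ls^6 < l^6 * ls^2 := by
        nlinarith [mul_pos (mul_pos hl hl) (mul_pos hls hls)]
      have hls6 : (0:ℝ) < ls^6 := by positivity
      nlinarith [mul_pos hc hls6]
    rw [DT_eq M l hl] at hPSD
    set a : ℝ := 1 + 1/l^2 + c * (l^4 + 1/l^2) with ha_def
    set b : ℝ := 2 * c * l^4 with hb_def
    have hab : a < b := by
      have hmul : (b - a) * l^2 = c * l^6 - (l^2 + 1 + c) := by
        rw [ha_def, hb_def]; field_simp; ring
      nlinarith [pow_pos hl 2]
    have h2 := (Matrix.posSemidef_iff_dotProduct_mulVec.mp hPSD).2 ![1, -1, 0]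
    have hQ : dotProduct (star ![(1:ℝ), -1, 0])
          ((Matrix.of fun i j => if i = j then a else b).mulVec ![1, -1, 0]) = 2*a - 2*b := by
      simp [Matrix.mulVec, dotProduct, Fin.sum_univ_three]
      ring
    rw [hQ] at h2
    linarith
end

section
/- For M > 2/3, if β, γ > 0 with β ≠ γ satisfy T₁(β,β,γ) = T₃(β,β,γ), then γ = (√((9M² + 6M - 8)β⁴ + 9β²) + 3β)/((3M-2)β⁴). -/
theorem gamma_formula (M β γ : ℝ) (hM : M > 2/3)
    (hβ : 0 < β) (hγ : 0 < γ) (hne : β ≠ γ)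
    (heq : (((3*M - 2)/6)*(β^4*γ^2 - 1) + β^2 - 1)/β =
      (1/6)*(3*M - 2)*β^4*γ - (3*M + 4)/(6*γ) + γ) :
    γ = (Real.sqrt ((9*M^2 + 6*M - 8)*β^4 + 9*β^2) + 3*β)/((3*M - 2)*β^4) := by
  have hβ0 : β ≠ 0 := ne_of_gt hβ
  have hγ0 : γ ≠ 0 := ne_of_gt hγ
  have ha : 0 < 3*M - 2 := by linarith
  field_simp at heq
  have hP : (3*M - 2)*β^4*γ^2 - 6*β*γ - (3*M + 4) = 0 := by
    have hfac : (β - γ) * ((3*M - 2)*β^4*γ^2 - 6*β*γ - (3*M + 4)) = 0 := by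
      linear_combination (-1) * heq
    rcases mul_eq_zero.mp hfac with h | h
    · exact absurd (sub_eq_zero.mp h) hne
    · exact h
  set s := Real.sqrt ((9*M^2 + 6*M - 8)*β^4 + 9*β^2) with hs
  have hnn : 0 ≤ (9*M^2 + 6*M - 8)*β^4 + 9*β^2 := by nlinarith [mul_pos (mul_pos ha (show (0:ℝ) < 3*M+4 by linarith)) (pow_pos hβ 4), sq_nonneg β]
  have hs2 : s^2 = (9*M^2 + 6*M - 8)*β^4 + 9*β^2 := Real.sq_sqrt hnn
  have hkey : (3*M - 2)*β^4*γ - 3*β = s := by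
    have h1 : ((3*M - 2)*β^4*γ - 3*β)^2 = s^2 := by
      rw [hs2]; nlinarith [hP]
    have h2 : 0 ≤ (3*M - 2)*β^4*γ - 3*β := by nlinarith [hP, mul_pos hβ hγ]
    have h3 : 0 ≤ s := Real.sqrt_nonneg _
    nlinarith [h1, h2, h3]
  have hb4 : (3*M - 2)*β^4 ≠ 0 := by positivity
  field_simp
  linarith [hkey]
end
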